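/- arXiv:1512.08876 — 2 statements merged into one kernel-verified Lean document; each statement's English description precedes it below -/
import Mathlib

section
/- Let A be a commutative ring that is finitely generated as a ℤ-algebra and let m be a maximal ideal of A. Then the residue field A/m is a finite field. -/
instance : IsJacobsonRing ℤ := by
  rw [isJacobsonRing_iff_prime_eq]
  intro P hP
  by_cases hbot : P = ⊥
  · subst hbot
    refine le_antisymm ?_ Ideal.le_jacobson
    intro x hx
    rw [Ideal.mem_jacobson_bot] at hx
    have h1 := hx 1
    have h2 := hx (-1)
    rw [Int.isUnit_iff] at h1 h2
    simp only [Ideal.mem_bot]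
    omega
  · haveI := IsPrime.to_maximal_ideal hbot
    exact Ideal.jacobson_eq_self_of_isMaximal

/-- Nullstellensatz over ℤ: residue fields of maximal ideals of finitely
generated ℤ-algebras are finite. -/
theorem stmt_3 (A : Type*) [CommRing A] [Algebra ℤ A]
    (hfg : Algebra.FiniteType ℤ A) (m : Ideal A) (hm : m.IsMaximal) :
    Finite (A ⧸ m) := by
  haveI := hm
  letI : Field (A ⧸ m) := Ideal.Quotient.field m
  haveI : Algebra.FiniteType A (A ⧸ m) :=
    Algebra.FiniteType.of_surjective
      (Ideal.Quotient.mkₐ A m) (Ideal.Quotient.mkₐ_surjective A m)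
  haveI : Algebra.FiniteType ℤ (A ⧸ m) := Algebra.FiniteType.trans hfg ‹_›
  have hfin := finite_of_finite_type_of_isJacobsonRing ℤ (A ⧸ m)
  haveI : Module.Finite ℤ (A ⧸ m) := by
    have e : (Algebra.toModule : Module ℤ (A ⧸ m)) = AddCommGroup.toIntModule _ :=
      @Subsingleton.elim _ AddCommGroup.uniqueIntModule.instSubsingleton _ _
    exact e ▸ hfin
  haveI : Algebra.IsIntegral ℤ (A ⧸ m) := @Algebra.IsIntegral.of_finite ℤ (A ⧸ m) _ _ _ hfin
  obtain ⟨p, hp⟩ := CharP.exists (A ⧸ m)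
  rcases CharP.char_is_prime_or_zero (A ⧸ m) p with hprime | hzero
  · haveI : Fact p.Prime := ⟨hprime⟩
    letI : Algebra (ZMod p) (A ⧸ m) := ZMod.algebra _ p
    have hfg' : AddGroup.FG (A ⧸ m) := Module.Finite.iff_addGroup_fg.mp ‹_›
    exact AddCommGroup.finite_of_fg_torsion (A ⧸ m) fun x =>
      isOfFinAddOrder_iff_nsmul_eq_zero.mpr ⟨p, hprime.pos, by
        simp [nsmul_eq_mul, CharP.cast_eq_zero]⟩
  · subst hzero
    haveI : CharZero (A ⧸ m) := CharP.charP_to_charZero _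
    have hinj : Function.Injective (algebraMap ℤ (A ⧸ m)) := fun a b h => by
      simpa using h
    exact absurd (isField_of_isIntegral_of_isField hinj (Field.toIsField _)) Int.not_isField
end

section
/- Let G be a finitely generated group such that every homomorphism from G to every finite group is trivial. Then for every field k of characteristic 0, every integer r ≥ 1, and every homomorphism ρ: G → GL_r(k) with finitely generated image contained in GL_r(A) for some reduced subring A ⊆ k finitely generated as a ℤ-algebra, the homomorphism ρ is trivial. -/
open Matrix

/-- `ℤ` is a Jacobson ring. -/
lemma int_isJacobsonRing : IsJacobsonRing ℤ := by
  rw [isJacobsonRing_iff_prime_eq]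
  intro P hP
  by_cases hbot : P = ⊥
  · subst hbot
    refine le_antisymm ?_ Ideal.le_jacobson
    intro x hx
    have h1 := (Ideal.mem_jacobson_bot.mp hx) 1
    have h2 := (Ideal.mem_jacobson_bot.mp hx) (-1)
    rw [Int.isUnit_iff] at h1 h2
    have : x = 0 := by omega
    simp [this]
  · haveI := hP
    have hmax : P.IsMaximal := IsPrime.to_maximal_ideal hbot
    refine le_antisymm ?_ Ideal.le_jacobson
    exact sInf_le ⟨le_refl P, hmax⟩

/-- A field which is module-finite over `ℤ` is finite. -/
lemma finite_of_field_moduleFinite_int (F : Type*) [Field F] [Module.Finite ℤ F] :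
    Finite F := by
  have hint : Algebra.IsIntegral ℤ F := Algebra.IsIntegral.of_finite ℤ F
  rcases CharP.char_is_prime_or_zero F (ringChar F) with hp | hp
  · -- positive characteristic: F is a finite module over ZMod p
    haveI : Fact (Nat.Prime (ringChar F)) := ⟨hp⟩
    letI : Algebra (ZMod (ringChar F)) F := ZMod.algebra F (ringChar F)
    haveI : IsScalarTower ℤ (ZMod (ringChar F)) F :=
      IsScalarTower.of_algebraMap_eq' (RingHom.ext_int _ _)
    haveI : Module.Finite (ZMod (ringChar F)) F :=
      Module.Finite.of_restrictScalars_finite ℤ (ZMod (ringChar F)) F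
    exact Module.finite_of_finite (ZMod (ringChar F))
  · -- characteristic zero: ℚ embeds, but 1/2 would be integral over ℤ
    haveI : CharP F 0 := hp ▸ ringChar.charP F
    haveI : CharZero F := CharP.charP_to_charZero F
    exfalso
    set f : ℚ →ₐ[ℤ] F := (Rat.castHom F).toIntAlgHom with hf
    have hinj : Function.Injective f := (Rat.castHom F).injective
    have h2 : IsIntegral ℤ (f (1/2 : ℚ)) := Algebra.IsIntegral.isIntegral _
    have h3 : IsIntegral ℤ (1/2 : ℚ) := (isIntegral_algHom_iff f hinj).mp h2
    obtain ⟨y, hy⟩ := IsIntegrallyClosed.isIntegral_iff.mp h3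
    have : (y : ℚ) = 1/2 := by rw [← hy]; simp
    have h4 : (2 * y : ℤ) = 1 := by
      have h5 : ((2 * y : ℤ) : ℚ) = ((1 : ℤ) : ℚ) := by push_cast; rw [this]; norm_num
      exact_mod_cast h5
    omega

/-- Mal'cev–Grothendieck core: a finitely generated group all of whose finite
quotients are trivial has no nontrivial representations into `GL r k`
(char `k = 0`) whose finitely generated image lies in `GL r A` for a reduced
subring `A ⊆ k` finitely generated as a ℤ-algebra. -/
theorem stmt_14 (G : Type) [Group G] [Group.FG G]
    (hfin : ∀ (H : Type) [Group H] [Finite H] (f : G →* H) (g : G), f g = 1)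
    (k : Type) [Field k] [CharZero k] (r : ℕ) (hr : 1 ≤ r)
    (ρ : G →* GL (Fin r) k) (him : Group.FG ρ.range)
    (A : Subring k) (hred : IsReduced A) (hfg : Algebra.FiniteType ℤ A)
    (hA : ∀ (g : G) (i j : Fin r),
      ((ρ g : Matrix (Fin r) (Fin r) k) i j ∈ A) ∧
      (((ρ g)⁻¹ : Matrix (Fin r) (Fin r) k) i j ∈ A)) :
    ∀ g : G, ρ g = 1 := by
  -- the entrywise inclusion of matrices over A into matrices over k
  set ι : Matrix (Fin r) (Fin r) A →+* Matrix (Fin r) (Fin r) k :=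
    (A.subtype).mapMatrix with hιdef
  have hι : Function.Injective ι := by
    intro M N h
    ext i j
    exact congrFun (congrFun h i) j
  -- lift ρ to a homomorphism into GL r A
  set M : G → Matrix (Fin r) (Fin r) A :=
    fun g i j => ⟨(ρ g : Matrix (Fin r) (Fin r) k) i j, (hA g i j).1⟩ with hM
  set N : G → Matrix (Fin r) (Fin r) A :=
    fun g i j => ⟨((ρ g)⁻¹ : Matrix (Fin r) (Fin r) k) i j, (hA g i j).2⟩ with hN
  have hιM : ∀ g, ι (M g) = (ρ g : Matrix (Fin r) (Fin r) k) := by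
    intro g; ext i j; rfl
  have hιN : ∀ g, ι (N g) = ((ρ g)⁻¹ : Matrix (Fin r) (Fin r) k) := by
    intro g; ext i j; rfl
  have hMN : ∀ g, M g * N g = 1 := by
    intro g
    apply hι
    rw [_root_.map_mul ι, _root_.map_one ι, hιM, hιN]
    rw [← Matrix.coe_units_inv]
    exact (ρ g).mul_inv
  have hNM : ∀ g, N g * M g = 1 := by
    intro g
    apply hι
    rw [_root_.map_mul ι, _root_.map_one ι, hιM, hιN]
    rw [← Matrix.coe_units_inv]
    exact (ρ g).inv_mul
  set u : G → GL (Fin r) A := fun g => ⟨M g, N g, hMN g, hNM g⟩ with hu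
  set ρ' : G →* GL (Fin r) A :=
    { toFun := u
      map_one' := by
        apply Units.ext
        apply hι
        show ι (M 1) = ι 1
        rw [hιM, _root_.map_one ρ, Units.val_one, _root_.map_one ι]
      map_mul' := by
        intro g h
        apply Units.ext
        apply hι
        show ι (M (g * h)) = ι (M g * M h)
        rw [_root_.map_mul ι (M g) (M h), hιM, hιM, hιM, _root_.map_mul ρ g h,
          Units.val_mul] } with hρ'
  -- A is a Jacobson ring
  haveI : IsJacobsonRing ℤ := int_isJacobsonRing
  haveI : IsJacobsonRing A := isJacobsonRing_of_finiteType (A := ℤ)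
  -- reduction mod any maximal ideal is trivial
  have key : ∀ (g : G) (m : Ideal A), m.IsMaximal → ∀ i j, M g i j - (1 : Matrix (Fin r) (Fin r) A) i j ∈ m := by
    intro g m hm i j
    haveI : m.IsMaximal := hm
    letI : Field (A ⧸ m) := Ideal.Quotient.field m
    haveI : Algebra.FiniteType ℤ (A ⧸ m) :=
      Algebra.FiniteType.of_surjective (Ideal.Quotient.mkₐ ℤ m)
        (Ideal.Quotient.mkₐ_surjective ℤ m)
    haveI : Module.Finite ℤ (A ⧸ m) := finite_of_finite_type_of_isJacobsonRing ℤ (A ⧸ m)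
    haveI : Finite (A ⧸ m) := finite_of_field_moduleFinite_int (A ⧸ m)
    haveI : Finite (GL (Fin r) (A ⧸ m)) := by
      unfold Matrix.GeneralLinearGroup
      infer_instance
    set π : Matrix (Fin r) (Fin r) A →+* Matrix (Fin r) (Fin r) (A ⧸ m) :=
      (Ideal.Quotient.mk m).mapMatrix with hπ
    have htriv := hfin (GL (Fin r) (A ⧸ m)) ((Units.map π.toMonoidHom).comp ρ') g
    have hval : π (M g) = (1 : Matrix (Fin r) (Fin r) (A ⧸ m)) := by
      have := congrArg Units.val htriv
      exact this
    have hentry : Ideal.Quotient.mk m (M g i j) =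
        Ideal.Quotient.mk m ((1 : Matrix (Fin r) (Fin r) A) i j) := by
      have h1 : π (M g) i j = (1 : Matrix (Fin r) (Fin r) (A ⧸ m)) i j := by rw [hval]
      have h2 : π (1 : Matrix (Fin r) (Fin r) A) i j
          = (1 : Matrix (Fin r) (Fin r) (A ⧸ m)) i j := by rw [_root_.map_one π]
      exact h1.trans h2.symm
    rw [Ideal.Quotient.eq] at hentry
    exact hentry
  -- conclude from Jacobson + reduced that M g = 1
  intro g
  have hMg : M g = 1 := by
    ext i j
    have hjac : M g i j - (1 : Matrix (Fin r) (Fin r) A) i j ∈ (⊥ : Ideal A).jacobson := by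
      rw [Ideal.jacobson]
      rw [Ideal.mem_sInf]
      rintro J ⟨-, hJ⟩
      exact key g J hJ i j
    have hbot : (⊥ : Ideal A).jacobson = ⊥ := by
      apply IsJacobsonRing.out'
      have h0 : (⊥ : Ideal A).radical = ⊥ := by
        have := nilradical_eq_zero A
        rwa [nilradical, Submodule.zero_eq_bot] at this
      intro x hx
      rwa [h0] at hx
    rw [hbot, Ideal.mem_bot, sub_eq_zero] at hjac
    exact congrArg Subtype.val hjac
  apply Units.ext
  have h1 : ι (M g) = ι 1 := by rw [hMg]
  rw [hιM, _root_.map_one ι] at h1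
  rw [Units.val_one]
  exact h1
end
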